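/- Let a > 0, k ≥ 0, 0 ≤ b ≤ k, ψ* = arctan(−b/a), and δ₁ = a/(2√(a² + k²)). Then for all ψ with |ψ − ψ*| < δ₁, cos ψ (b cos ψ + a sin ψ)(ψ − ψ*) ≥ (a/2)(ψ − ψ*)². -/

import Mathlib

set_option maxHeartbeats 1000000 in
theorem stmt_13 (a k b : ℝ) (ha : 0 < a) (hk : 0 ≤ k) (hb0 : 0 ≤ b) (hbk : b ≤ k)
    (ψ : ℝ) (hψ : |ψ - Real.arctan (-b/a)| < a / (2 * Real.sqrt (a^2 + k^2))) :
    Real.cos ψ * (b * Real.cos ψ + a * Real.sin ψ) * (ψ - Real.arctan (-b/a))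
      ≥ (a/2) * (ψ - Real.arctan (-b/a))^2 := by
  set c := Real.arctan (-b/a) with hc
  set t := ψ - c with ht
  set r := Real.sqrt (a^2 + k^2) with hrdef
  have hr2 : r^2 = a^2 + k^2 := Real.sq_sqrt (by positivity)
  have hr : 0 < r := Real.sqrt_pos.2 (by positivity)
  have hkr : k ≤ r := by nlinarith [sq_nonneg (r - k), sq_nonneg a]
  have har : a ≤ r := by nlinarith [sq_nonneg (r - a), sq_nonneg k]
  have hta : |t| < a / (2 * r) := hψ
  have ht12 : |t| < 1/2 := lt_of_lt_of_le hta (by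
    rw [div_le_div_iff₀ (by positivity) (by norm_num)]; linarith)
  have htabs : 0 ≤ |t| := abs_nonneg t
  have ha' : a ≠ 0 := ne_of_gt ha
  -- key identity
  have hC : Real.cos c = 1 / Real.sqrt (1 + (-b/a)^2) := Real.cos_arctan _
  have hS : Real.sin c = (-b/a) * Real.cos c := by
    rw [Real.sin_arctan, hC]; ring
  have hS' : a * Real.sin c = -b * Real.cos c := by
    rw [hS]; field_simp
  have hC2' : (a^2 + b^2) * Real.cos c ^ 2 = a^2 := by
    rw [Real.cos_sq_arctan]
    have h1 : 1 + (-b/a)^2 = (a^2 + b^2)/a^2 := by field_simp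
    rw [h1]
    field_simp
  have hψe : ψ = c + t := by rw [ht]; ring
  have hkeym : a^2 * (Real.cos ψ * (b * Real.cos ψ + a * Real.sin ψ))
      = a^2 * (b * Real.sin t ^ 2 + a * (Real.sin t * Real.cos t)) := by
    rw [hψe, Real.cos_add, Real.sin_add]
    linear_combination (a*Real.sin t*Real.cos t + b*Real.sin t^2) * hC2'
      + (a^2*Real.cos c*Real.cos t^2 - (2*b^2+a^2)*Real.cos c*Real.sin t^2
        + (a*Real.sin c + b*Real.cos c)*(b*Real.sin t^2 - a*Real.sin t*Real.cos t)) * hS'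
  have hkey : Real.cos ψ * (b * Real.cos ψ + a * Real.sin ψ)
      = b * Real.sin t ^ 2 + a * (Real.sin t * Real.cos t) :=
    mul_left_cancel₀ (pow_ne_zero 2 ha') hkeym
  rw [hkey]
  -- evenness
  have heven : a * (Real.sin t * Real.cos t) * t
      = a * (Real.sin |t| * Real.cos |t|) * |t| := by
    rcases abs_cases t with ⟨h1, _⟩ | ⟨h1, _⟩
    · rw [h1]
    · rw [h1, Real.sin_neg, Real.cos_neg]; ring
  have hbound : b * Real.sin t ^ 2 * t ≥ -(k * |t| * t^2) := by
    have h1 : |b * Real.sin t ^ 2 * t| ≤ k * |t| * t^2 := by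
      rw [abs_mul, abs_mul]
      have h2 : |Real.sin t ^ 2| ≤ t^2 := by
        rw [abs_pow, ← sq_abs t]
        exact pow_le_pow_left₀ (abs_nonneg _) Real.abs_sin_le_abs 2
      have h3 : |b| ≤ k := by rwa [abs_of_nonneg hb0]
      calc |b| * |Real.sin t ^ 2| * |t| ≤ k * t^2 * |t| := by
            apply mul_le_mul (mul_le_mul h3 h2 (abs_nonneg _) hk) le_rfl (abs_nonneg _)
            positivity
        _ = k * |t| * t^2 := by ring
    linarith [neg_abs_le (b * Real.sin t ^ 2 * t)]
  -- sin u cos u ≥ u - u^3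
  have hsc : Real.sin |t| * Real.cos |t| ≥ |t| - |t|^3 := by
    rcases eq_or_lt_of_le htabs with h0 | h0
    · rw [← h0]; simp
    · have h2 : (0:ℝ) < 2 * |t| := by linarith
      have h3 : 2 * |t| ≤ 1 := by linarith
      have h4 := Real.sin_gt_sub_cube h2
      have hm : Real.sin (2 * |t|) = 2 * Real.sin |t| * Real.cos |t| :=
        Real.sin_two_mul |t|
      nlinarith [h4, hm, pow_pos h0 3]
  -- final arithmetic
  have hu' : 2 * r * |t| ≤ a := by
    have h := hta.le
    rw [le_div_iff₀ (by positivity : (0:ℝ) < 2*r)] at h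
    linarith
  have F1 : a*((2*r*|t|)*(2*r*|t|)) ≤ a*(a*a) :=
    mul_le_mul_of_nonneg_left (mul_le_mul hu' hu' (by positivity) ha.le) ha.le
  have F2 : (2*k*r)*(2*r*|t|) ≤ (2*k*r)*a :=
    mul_le_mul_of_nonneg_left hu' (by positivity)
  have F3 : (0:ℝ) ≤ a*(r-k)^2 := by positivity
  have F4 : a*r^2 = a*(a^2+k^2) := by rw [hr2]
  have hkeypos : 0 ≤ 4*r^2*(a/2 - a*|t|^2 - k*|t|) := by linarith [F1, F2, F3, F4]
  have hfin : a * |t|^2 + k * |t| ≤ a / 2 := by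
    have h4 : (0:ℝ) < 4*r^2 := by positivity
    have h5 := (mul_nonneg_iff_of_pos_left h4).mp hkeypos
    linarith
  have h2' := mul_le_mul_of_nonneg_left hfin (mul_nonneg htabs htabs)
  have h1 : a * (Real.sin |t| * Real.cos |t|) * |t| ≥ a * (|t| - |t|^3) * |t| := by
    apply mul_le_mul_of_nonneg_right _ htabs
    exact mul_le_mul_of_nonneg_left hsc ha.le
  have ht2 : t^2 = |t|^2 := (sq_abs t).symm
  calc (b * Real.sin t ^ 2 + a * (Real.sin t * Real.cos t)) * t
      = b * Real.sin t ^ 2 * t + a * (Real.sin t * Real.cos t) * t := by ring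
    _ ≥ -(k * |t| * t^2) + a * (Real.sin |t| * Real.cos |t|) * |t| := by
        rw [heven]; linarith
    _ ≥ (a/2) * t^2 := by rw [ht2]; linarith [h1, h2']
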